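/- For every smooth vector field w : ℝ² → ℝ², div w = G₁(w) div Σ₁(w) + G₂(w) div Σ₂(w) + L(w)[∇w](1 - |w|²), where G₁(w) = -2w₁w₂, G₂(w) = w₁² - w₂², and L(w)[∇w] = (1+|w|²) div w + 2w₁w₂(∂₁w₂ + ∂₂w₁) + (w₂² - w₁²)(∂₂w₂ - ∂₁w₁). -/

import Mathlib

noncomputable section
open Real

/-- The first Jin-Kohn entropy. -/
def JKS1 (v : ℝ × ℝ) : ℝ × ℝ :=
  (v.2 * (1 - v.1 ^ 2 - v.2 ^ 2 / 3), v.1 * (1 - v.2 ^ 2 - v.1 ^ 2 / 3))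

/-- The second Jin-Kohn entropy. -/
def JKS2 (v : ℝ × ℝ) : ℝ × ℝ :=
  (-v.1 * (1 - 2 * v.1 ^ 2 / 3), v.2 * (1 - 2 * v.2 ^ 2 / 3))

/-- Partial derivative in the first coordinate direction. -/
def pd1 (f : ℝ × ℝ → ℝ) (x : ℝ × ℝ) : ℝ := fderiv ℝ f x (1, 0)

/-- Partial derivative in the second coordinate direction. -/
def pd2 (f : ℝ × ℝ → ℝ) (x : ℝ × ℝ) : ℝ := fderiv ℝ f x (0, 1)

theorem stmt5 (w : ℝ × ℝ → ℝ × ℝ) (hw : ContDiff ℝ 1 w) (x : ℝ × ℝ) :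
    pd1 (fun y => (w y).1) x + pd2 (fun y => (w y).2) x
      = (-2 * (w x).1 * (w x).2)
          * (pd1 (fun y => (JKS1 (w y)).1) x + pd2 (fun y => (JKS1 (w y)).2) x)
        + ((w x).1 ^ 2 - (w x).2 ^ 2)
          * (pd1 (fun y => (JKS2 (w y)).1) x + pd2 (fun y => (JKS2 (w y)).2) x)
        + ((1 + ((w x).1 ^ 2 + (w x).2 ^ 2))
              * (pd1 (fun y => (w y).1) x + pd2 (fun y => (w y).2) x)
            + 2 * (w x).1 * (w x).2
              * (pd1 (fun y => (w y).2) x + pd2 (fun y => (w y).1) x)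
            + ((w x).2 ^ 2 - (w x).1 ^ 2)
              * (pd2 (fun y => (w y).2) x - pd1 (fun y => (w y).1) x))
          * (1 - ((w x).1 ^ 2 + (w x).2 ^ 2)) := by
  have hw' := hw.differentiable one_ne_zero
  have h1 : HasFDerivAt (fun y => (w y).1) (fderiv ℝ (fun y => (w y).1) x) x :=
    ((hw' x).fst).hasFDerivAt
  have h2 : HasFDerivAt (fun y => (w y).2) (fderiv ℝ (fun y => (w y).2) x) x :=
    ((hw' x).snd).hasFDerivAt
  set D1 := fderiv ℝ (fun y => (w y).1) x with hD1
  set D2 := fderiv ℝ (fun y => (w y).2) x with hD2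
  have h1sq : HasFDerivAt (fun y => (w y).1 ^ 2) ((w x).1 • D1 + (w x).1 • D1) x := by
    exact (h1.mul h1).congr_of_eventuallyEq (Filter.Eventually.of_forall fun y => by simp [pow_two])
  have h2sq : HasFDerivAt (fun y => (w y).2 ^ 2) ((w x).2 • D2 + (w x).2 • D2) x := by
    exact (h2.mul h2).congr_of_eventuallyEq (Filter.Eventually.of_forall fun y => by simp [pow_two])
  have eq1 : (fun y => (JKS1 (w y)).1)
      = fun y => (w y).2 * (1 - (w y).1 ^ 2 - (3:ℝ)⁻¹ * (w y).2 ^ 2) := by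
    funext y; simp only [JKS1]; ring
  have eq2 : (fun y => (JKS1 (w y)).2)
      = fun y => (w y).1 * (1 - (w y).2 ^ 2 - (3:ℝ)⁻¹ * (w y).1 ^ 2) := by
    funext y; simp only [JKS1]; ring
  have eq3 : (fun y => (JKS2 (w y)).1)
      = fun y => -(w y).1 * (1 - (2/3 : ℝ) * (w y).1 ^ 2) := by
    funext y; simp only [JKS2]; ring
  have eq4 : (fun y => (JKS2 (w y)).2)
      = fun y => (w y).2 * (1 - (2/3 : ℝ) * (w y).2 ^ 2) := by
    funext y; simp only [JKS2]; ring
  have H11 : HasFDerivAt (fun y => (w y).2 * (1 - (w y).1 ^ 2 - (3:ℝ)⁻¹ * (w y).2 ^ 2)) _ x :=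
    h2.mul (((hasFDerivAt_const (1:ℝ) x).sub h1sq).sub (h2sq.const_mul (3:ℝ)⁻¹))
  have H12 : HasFDerivAt (fun y => (w y).1 * (1 - (w y).2 ^ 2 - (3:ℝ)⁻¹ * (w y).1 ^ 2)) _ x :=
    h1.mul (((hasFDerivAt_const (1:ℝ) x).sub h2sq).sub (h1sq.const_mul (3:ℝ)⁻¹))
  have H21 : HasFDerivAt (fun y => -(w y).1 * (1 - (2/3 : ℝ) * (w y).1 ^ 2)) _ x :=
    h1.neg.mul ((hasFDerivAt_const (1:ℝ) x).sub (h1sq.const_mul (2/3 : ℝ)))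
  have H22 : HasFDerivAt (fun y => (w y).2 * (1 - (2/3 : ℝ) * (w y).2 ^ 2)) _ x :=
    h2.mul ((hasFDerivAt_const (1:ℝ) x).sub (h2sq.const_mul (2/3 : ℝ)))
  simp only [pd1, pd2, eq1, eq2, eq3, eq4, H11.fderiv, H12.fderiv, H21.fderiv, H22.fderiv]
  simp only [ContinuousLinearMap.add_apply, ContinuousLinearMap.smul_apply,
    ContinuousLinearMap.sub_apply, ContinuousLinearMap.zero_apply, ContinuousLinearMap.neg_apply,
    smul_eq_mul, Pi.neg_apply, ← hD1, ← hD2]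
  ring
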